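/- Let x > 0 and a > 0 be real numbers. Then the limit as n → ∞ of (1/(2n)) · log( a^{2n} · L_{2n}(x/a) ) exists and equals log( (x + √(x² + 4a²)) / 2 ). -/

import Mathlib

open Filter Real

/-- The Lucas polynomials. -/
def lucas : ℕ → ℝ → ℝ
  | 0, _ => 2
  | 1, x => x
  | (m + 2), x => x * lucas (m + 1) x + lucas m x

lemma lucas_closed (y p q : ℝ) (hs : p + q = y) (hm : p * q = -1) :
    ∀ m, lucas m y = p ^ m + q ^ m := by
  intro m
  induction m using Nat.twoStepInduction with
  | zero => norm_num [lucas]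
  | one => simp [lucas, hs]
  | more m ih1 ih2 =>
    show y * lucas (m + 1) y + lucas m y = _
    rw [ih1, ih2, ← hs]
    linear_combination (p ^ m + q ^ m) * hm

lemma aux_tendsto_zero (c : ℝ) :
    Filter.Tendsto (fun n : ℕ => (1 / (2 * (n : ℝ))) * c) Filter.atTop (nhds 0) := by
  have h1 : Filter.Tendsto (fun n : ℕ => (2 * (n : ℝ))) Filter.atTop Filter.atTop :=
    Filter.Tendsto.const_mul_atTop two_pos tendsto_natCast_atTop_atTop
  have h2 := h1.inv_tendsto_atTop
  have := h2.mul_const c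
  simpa [one_div] using this

theorem cycleDicot_free_energy (x a : ℝ) (hx : 0 < x) (ha : 0 < a) :
    Filter.Tendsto
      (fun n : ℕ => (1 / (2 * (n : ℝ))) * Real.log (a ^ (2 * n) * lucas (2 * n) (x / a)))
      Filter.atTop
      (nhds (Real.log ((x + Real.sqrt (x ^ 2 + 4 * a ^ 2)) / 2))) := by
  set s := Real.sqrt (x ^ 2 + 4 * a ^ 2) with hs_def
  have hsq : s ^ 2 = x ^ 2 + 4 * a ^ 2 := Real.sq_sqrt (by positivity)
  have hxs : x < s := by
    rw [hs_def]
    exact (Real.lt_sqrt hx.le).mpr (by nlinarith)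
  set α := (x + s) / 2 with hα_def
  set β := (x - s) / 2 with hβ_def
  have hαpos : 0 < α := by positivity
  have hαβmul : α * β = -a ^ 2 := by
    rw [hα_def, hβ_def]; nlinarith
  have hpq_sum : α / a + β / a = x / a := by field_simp; ring
  have hpq_mul : (α / a) * (β / a) = -1 := by
    field_simp
    linear_combination hαβmul
  have hkey : ∀ n : ℕ, a ^ (2 * n) * lucas (2 * n) (x / a) = α ^ (2 * n) + β ^ (2 * n) := by
    intro n
    rw [lucas_closed (x / a) (α / a) (β / a) hpq_sum hpq_mul (2 * n)]
    have ha' : a ^ (2 * n) ≠ 0 := by positivity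
    rw [div_pow α a, div_pow β a, ← add_div, mul_div_assoc', mul_div_cancel_left₀ _ ha']
  set r := β / α with hr_def
  have hβr : β = α * r := by rw [hr_def]; field_simp
  have hrabs : |r| < 1 := by
    rw [hr_def, abs_div, abs_of_pos hαpos, div_lt_one hαpos]
    rw [hα_def, hβ_def, abs_lt]
    constructor <;> [nlinarith; nlinarith]
  have hr2n_nonneg : ∀ n : ℕ, 0 ≤ r ^ (2 * n) := by
    intro n; rw [pow_mul]; positivity
  have hr2n_le : ∀ n : ℕ, r ^ (2 * n) ≤ 1 := by
    intro n
    rw [pow_mul]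
    apply pow_le_one₀ (by positivity)
    nlinarith [sq_abs r, abs_nonneg r]
  have hlog_split : ∀ n : ℕ,
      Real.log (a ^ (2 * n) * lucas (2 * n) (x / a)) =
        (2 * n : ℝ) * Real.log α + Real.log (1 + r ^ (2 * n)) := by
    intro n
    rw [hkey n, hβr]
    have h1 : α ^ (2 * n) + (α * r) ^ (2 * n) = α ^ (2 * n) * (1 + r ^ (2 * n)) := by
      rw [mul_pow]; ring
    rw [h1, Real.log_mul (by positivity) (by have := hr2n_nonneg n; positivity),
      Real.log_pow]
    push_cast
    ring
  have hgoal_eq : Real.log ((x + Real.sqrt (x ^ 2 + 4 * a ^ 2)) / 2) = Real.log α := rfl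
  rw [hgoal_eq]
  have heq : ∀ᶠ n : ℕ in Filter.atTop,
      Real.log α + (1 / (2 * (n : ℝ))) * Real.log (1 + r ^ (2 * n)) =
        (1 / (2 * (n : ℝ))) * Real.log (a ^ (2 * n) * lucas (2 * n) (x / a)) := by
    filter_upwards [Filter.eventually_ge_atTop 1] with n hn
    have hn' : (n : ℝ) ≠ 0 := Nat.cast_ne_zero.mpr (by omega)
    rw [hlog_split n]
    field_simp
  apply Filter.Tendsto.congr' heq
  have hzero : Filter.Tendsto
      (fun n : ℕ => (1 / (2 * (n : ℝ))) * Real.log (1 + r ^ (2 * n)))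
      Filter.atTop (nhds 0) := by
    apply squeeze_zero
    · intro n
      apply mul_nonneg (by positivity)
      apply Real.log_nonneg
      linarith [hr2n_nonneg n]
    · intro n
      show _ ≤ (1 / (2 * (n : ℝ))) * Real.log 2
      apply mul_le_mul_of_nonneg_left _ (by positivity)
      apply Real.log_le_log (by linarith [hr2n_nonneg n])
      linarith [hr2n_le n]
    · exact aux_tendsto_zero (Real.log 2)
  have := (tendsto_const_nhds (x := Real.log α) (f := Filter.atTop (α := ℕ))).add hzero
  simpa using this
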